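/- Let Ω ⊂ ℝᵈ be compact and contained in a ball of radius R. Let K : Ω × Ω → ℝ be a symmetric positive semidefinite kernel with |K(x,x) − K(x,y)| ≤ L‖x−y‖ for all x,y ∈ Ω. Let Rₙ be the residual of the Cholesky algorithm with complete pivoting after n > 1 steps. Then ‖Rₙ‖_∞ ≤ 8LR/(n^{1/d} − 1). -/

import Mathlib

/-- A kernel `K` on a set `Ω` is symmetric positive semidefinite if it is symmetric on `Ω`
and every finite kernel matrix formed from points of `Ω` is positive semidefinite. -/
def IsPSDKernel {E : Type*} (Ω : Set E) (K : E → E → ℝ) : Prop :=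
  (∀ x ∈ Ω, ∀ y ∈ Ω, K x y = K y x) ∧
  ∀ (n : ℕ) (p : Fin n → E), (∀ i, p i ∈ Ω) →
    ∀ c : Fin n → ℝ, 0 ≤ ∑ i, ∑ j, c i * c j * K (p i) (p j)

/-- One pivoted Cholesky step at pivot `z`. -/
noncomputable def cholStep {E : Type*} (R : E → E → ℝ) (z : E) : E → E → ℝ :=
  fun x y => R x y - R x z * R z y / R z z

/-- The residual of the pivoted Cholesky algorithm after successively pivoting at the
points of the list `zs` (in order). -/
noncomputable def cholResid {E : Type*} (K : E → E → ℝ) (zs : List E) : E → E → ℝ :=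
  zs.foldl cholStep K

open Metric MeasureTheory Measure

section Geometry

lemma aux_vol_count {d n : ℕ} (c : EuclideanSpace ℝ (Fin d)) (R r : ℝ)
    (hR : 0 ≤ R) (hr : 0 < r) (z : Fin n → EuclideanSpace ℝ (Fin d))
    (hz : ∀ i, z i ∈ closedBall c R)
    (hsep : ∀ i j, i ≠ j → 2 * r < dist (z i) (z j)) :
    (n : ℝ) * r ^ d ≤ (R + r) ^ d := by
  have hdisj : Pairwise (Function.onFun Disjoint (fun i => closedBall (z i) r)) := by
    intro i j hij
    exact closedBall_disjoint_closedBall (by linarith [hsep i j hij])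
  have hsub : (⋃ i, closedBall (z i) r) ⊆ closedBall c (R + r) := by
    intro w hw
    simp only [Set.mem_iUnion] at hw
    obtain ⟨i, hi⟩ := hw
    have h1 := hz i
    simp only [mem_closedBall] at *
    calc dist w c ≤ dist w (z i) + dist (z i) c := dist_triangle _ _ _
      _ ≤ r + R := by linarith
      _ = R + r := by ring
  have hmeas := measure_mono (μ := volume) hsub
  rw [measure_iUnion hdisj (fun i => measurableSet_closedBall)] at hmeas
  set B := volume (ball (0 : EuclideanSpace ℝ (Fin d)) 1) with hB
  have hball : ∀ x : EuclideanSpace ℝ (Fin d), volume (closedBall x r) =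
      ENNReal.ofReal (r ^ d) * B := by
    intro x
    rw [addHaar_closedBall volume x hr.le, finrank_euclideanSpace_fin]
  have hbig : volume (closedBall c (R + r)) = ENNReal.ofReal ((R + r) ^ d) * B := by
    rw [addHaar_closedBall volume c (by positivity), finrank_euclideanSpace_fin]
  rw [hbig] at hmeas
  have hsum : ∑' i : Fin n, volume (closedBall (z i) r)
      = (n : ENNReal) * (ENNReal.ofReal (r ^ d) * B) := by
    simp [hball, tsum_fintype]
  rw [hsum, ← mul_assoc] at hmeas
  have hB0 : B ≠ 0 := (measure_ball_pos volume _ one_pos).ne'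
  have hBt : B ≠ ⊤ := measure_ball_lt_top.ne
  rw [ENNReal.mul_le_mul_iff_left hB0 hBt] at hmeas
  have : ENNReal.ofReal ((n : ℝ) * r ^ d) ≤ ENNReal.ofReal ((R + r) ^ d) := by
    rwa [ENNReal.ofReal_mul (by positivity), ENNReal.ofReal_natCast]
  rwa [ENNReal.ofReal_le_ofReal_iff (by positivity)] at this

lemma aux_exists_close_pair {d n : ℕ} (hd : 0 < d) (hn : 1 < n)
    (c : EuclideanSpace ℝ (Fin d)) (R : ℝ) (hR : 0 ≤ R)
    (z : Fin n → EuclideanSpace ℝ (Fin d)) (hz : ∀ i, z i ∈ closedBall c R) :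
    ∃ i j, i ≠ j ∧ dist (z i) (z j) ≤ 2 * R / ((n : ℝ) ^ ((1 : ℝ) / (d : ℝ)) - 1) := by
  have hd' : (0:ℝ) < d := by exact_mod_cast hd
  have hrpow : (1:ℝ) < (n : ℝ) ^ ((1 : ℝ) / (d : ℝ)) := by
    rw [Real.one_lt_rpow_iff_of_pos (by positivity)]
    exact Or.inl ⟨by exact_mod_cast hn, by positivity⟩
  have hden : (0:ℝ) < (n : ℝ) ^ ((1 : ℝ) / (d : ℝ)) - 1 := by linarith
  set δ := 2 * R / ((n : ℝ) ^ ((1 : ℝ) / (d : ℝ)) - 1) with hδ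
  have hδ0 : 0 ≤ δ := by positivity
  by_contra hcon
  push_neg at hcon
  have hne : (Finset.univ.offDiag : Finset (Fin n × Fin n)).Nonempty := by
    refine ⟨(⟨0, by omega⟩, ⟨1, by omega⟩), ?_⟩
    simp [Finset.mem_offDiag, Fin.ext_iff]
  obtain ⟨p, hp, hmin⟩ := Finset.exists_min_image _ (fun q => dist (z q.1) (z q.2)) hne
  have hpne : p.1 ≠ p.2 := (Finset.mem_offDiag.mp hp).2.2
  set m := dist (z p.1) (z p.2) with hm
  have hδm : δ < m := hcon p.1 p.2 hpne
  set r := (δ + m) / 4 with hr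
  have hr0 : 0 < r := by have : 0 < m := lt_of_le_of_lt hδ0 hδm; positivity
  have hsep : ∀ i j, i ≠ j → 2 * r < dist (z i) (z j) := by
    intro i j hij
    have := hmin (i, j) (by simp [Finset.mem_offDiag, hij])
    simp only [hr]
    calc 2 * ((δ + m)/4) = (δ + m)/2 := by ring
      _ < m := by linarith
      _ ≤ dist (z i) (z j) := this
  have hvol := aux_vol_count c R r hR hr0 z hz hsep
  have hroot : (n : ℝ) ^ ((1 : ℝ) / (d : ℝ)) * r ≤ R + r := by
    have h1 : ((n : ℝ) * r ^ d) ^ ((1:ℝ)/(d:ℝ)) ≤ ((R + r) ^ d) ^ ((1:ℝ)/(d:ℝ)) :=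
      Real.rpow_le_rpow (by positivity) hvol (by positivity)
    have hdd : (d : ℝ) * ((1:ℝ)/(d:ℝ)) = 1 := by field_simp
    have h2 : ((R + r) ^ d : ℝ) ^ ((1:ℝ)/(d:ℝ)) = R + r := by
      rw [← Real.rpow_natCast (R + r) d, ← Real.rpow_mul (by positivity), hdd,
        Real.rpow_one]
    have h3 : ((n : ℝ) * r ^ d) ^ ((1:ℝ)/(d:ℝ))
        = (n : ℝ) ^ ((1:ℝ)/(d:ℝ)) * r := by
      rw [Real.mul_rpow (by positivity) (by positivity), ← Real.rpow_natCast r d,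
        ← Real.rpow_mul hr0.le, hdd, Real.rpow_one]
    rw [h2, h3] at h1
    exact h1
  have : (δ + m) / 2 ≤ δ := by
    have h4 : r * ((n : ℝ) ^ ((1 : ℝ) / (d : ℝ)) - 1) ≤ R := by nlinarith
    have h5 : 2 * r ≤ δ := by
      rw [hδ, le_div_iff₀ hden]; linarith
    linarith [h5, hr]
  linarith

end Geometry

section Algebra

lemma aux_cholStep_psd {E : Type*} {Ω : Set E} {Q : E → E → ℝ}
    (hQ : IsPSDKernel Ω Q) {z : E} (hz : z ∈ Ω) (hzz : 0 < Q z z) :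
    IsPSDKernel Ω (cholStep Q z) := by
  obtain ⟨hsym, hpsd⟩ := hQ
  constructor
  · intro x hx y hy
    simp only [cholStep]
    rw [hsym x hx y hy, hsym x hx z hz, hsym z hz y hy]
    ring
  intro m p hp c
  set s : ℝ := ∑ i, c i * Q (p i) z with hs
  set t : ℝ := -s / Q z z with ht
  set p' : Fin (m+1) → E := Fin.snoc p z with hp'
  set c' : Fin (m+1) → ℝ := Fin.snoc c t with hc'
  have hmem : ∀ i : Fin (m+1), p' i ∈ Ω := by
    intro i
    refine Fin.lastCases ?_ ?_ i
    · simp [hp', hz]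
    · intro i; simp [hp', hp i]
  have key := hpsd (m+1) p' hmem c'
  have inner : ∀ (a : E) (ca : ℝ), (∑ j : Fin (m+1), ca * c' j * Q a (p' j))
      = (∑ j, ca * c j * Q a (p j)) + ca * t * Q a z := by
    intro a ca
    rw [Fin.sum_univ_castSucc]
    simp [hp', hc']
  have expand : (∑ i : Fin (m+1), ∑ j : Fin (m+1), c' i * c' j * Q (p' i) (p' j))
      = (∑ i, ∑ j, c i * c j * Q (p i) (p j)) + 2 * (t * s) + t * t * Q z z := by
    rw [Fin.sum_univ_castSucc]
    simp only [hp', hc', Fin.snoc_castSucc, Fin.snoc_last]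
    rw [Finset.sum_congr rfl (fun i _ => inner (p i) (c i)), inner z t,
      Finset.sum_add_distrib]
    have hzp : ∀ j, Q z (p j) = Q (p j) z := fun j => hsym z hz (p j) (hp j)
    have e1 : (∑ i : Fin m, c i * t * Q (p i) z) = t * s := by
      rw [hs, Finset.mul_sum]; congr 1; ext i; ring
    have e2 : (∑ j : Fin m, t * c j * Q z (p j)) = t * s := by
      rw [hs, Finset.mul_sum]
      refine Finset.sum_congr rfl fun j _ => ?_
      rw [hzp j]; ring
    rw [e1, e2]; ring
  have goal_eq : (∑ i, ∑ j, c i * c j * cholStep Q z (p i) (p j))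
      = (∑ i, ∑ j, c i * c j * Q (p i) (p j)) - s * s / Q z z := by
    simp only [cholStep, mul_sub]
    rw [Finset.sum_congr rfl (fun i _ => Finset.sum_sub_distrib _ _), Finset.sum_sub_distrib]
    congr 1
    have h1 : ∀ i j : Fin m, c i * c j * (Q (p i) z * Q z (p j) / Q z z)
        = (c i * Q (p i) z) * (c j * Q z (p j)) / Q z z := fun i j => by ring
    rw [Finset.sum_congr rfl fun i _ => Finset.sum_congr rfl fun j _ => h1 i j]
    rw [Finset.sum_congr rfl fun i _ => (Finset.sum_div _ _ _).symm, ← Finset.sum_div]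
    rw [Finset.sum_congr rfl fun i _ => (Finset.mul_sum _ _ _).symm, ← Finset.sum_mul]
    have e2 : (∑ j : Fin m, c j * Q z (p j)) = s := by
      rw [hs]
      exact Finset.sum_congr rfl fun j _ => by rw [hsym z hz (p j) (hp j)]
    rw [e2]
  rw [goal_eq]
  rw [expand] at key
  have heq : (∑ i, ∑ j, c i * c j * Q (p i) (p j)) + 2 * (t * s) + t * t * Q z z
      = (∑ i, ∑ j, c i * c j * Q (p i) (p j)) - s * s / Q z z := by
    rw [ht]; field_simp; ring
  linarith [key, heq.le]

lemma aux_psd_offdiag_le {E : Type*} {Ω : Set E} {Q : E → E → ℝ}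
    (hQ : IsPSDKernel Ω Q) {x y : E} (hx : x ∈ Ω) (hy : y ∈ Ω) {B : ℝ}
    (h1 : Q x x ≤ B) (h2 : Q y y ≤ B) : |Q x y| ≤ B := by
  obtain ⟨hsym, hpsd⟩ := hQ
  have hmem : ∀ i : Fin 2, (![x, y] : Fin 2 → E) i ∈ Ω := by
    intro i; fin_cases i <;> simpa
  have k1 := hpsd 2 ![x, y] hmem ![1, 1]
  have k2 := hpsd 2 ![x, y] hmem ![1, -1]
  simp [Fin.sum_univ_two] at k1 k2
  have hyx : Q y x = Q x y := hsym y hy x hx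
  rw [abs_le]
  constructor <;> nlinarith [k1, k2]

lemma aux_cholResid_take_succ {E : Type*} (K : E → E → ℝ) {n : ℕ} (z : Fin n → E)
    (k : Fin n) : cholResid K ((List.ofFn z).take ((k : ℕ) + 1))
      = cholStep (cholResid K ((List.ofFn z).take k)) (z k) := by
  have hk : (List.ofFn z)[(k:ℕ)]? = some (z k) := by
    rw [List.getElem?_eq_getElem (by simp [k.isLt])]
    simp
  unfold cholResid
  rw [List.take_succ, hk, List.foldl_append]
  simp

end Algebra

theorem complete_pivoting_convergence {d n : ℕ} (hd : 0 < d) (hn : 1 < n)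
    (Ω : Set (EuclideanSpace ℝ (Fin d))) (hΩ : IsCompact Ω)
    (c : EuclideanSpace ℝ (Fin d)) (R : ℝ) (hball : Ω ⊆ Metric.closedBall c R)
    (K : EuclideanSpace ℝ (Fin d) → EuclideanSpace ℝ (Fin d) → ℝ)
    (hK : IsPSDKernel Ω K) (L : ℝ) (hL : 0 < L)
    (hLip : ∀ x ∈ Ω, ∀ y ∈ Ω, |K x x - K x y| ≤ L * ‖x - y‖)
    (z : Fin n → EuclideanSpace ℝ (Fin d)) (hzΩ : ∀ i, z i ∈ Ω)
    -- well-definedness: each selected pivot has a positive diagonal residual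
    (hwd : ∀ k : Fin n,
      0 < cholResid K ((List.ofFn z).take k) (z k) (z k))
    -- complete pivoting: `z k` maximizes the diagonal of the current residual over `Ω`
    (hcp : ∀ k : Fin n, ∀ x ∈ Ω,
      cholResid K ((List.ofFn z).take k) x x ≤
        cholResid K ((List.ofFn z).take k) (z k) (z k)) :
    ∀ x ∈ Ω, ∀ y ∈ Ω,
      |cholResid K (List.ofFn z) x y| ≤
        8 * L * R / ((n : ℝ) ^ ((1 : ℝ) / (d : ℝ)) - 1) := by
  intro x hx y hy
  set Qk : ℕ → EuclideanSpace ℝ (Fin d) → EuclideanSpace ℝ (Fin d) → ℝ :=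
    fun k => cholResid K ((List.ofFn z).take k) with hQk
  -- basic facts
  have hR : 0 ≤ R := le_trans dist_nonneg (hball (hzΩ ⟨0, by omega⟩))
  have hrpow : (1:ℝ) < (n : ℝ) ^ ((1 : ℝ) / (d : ℝ)) := by
    rw [Real.one_lt_rpow_iff_of_pos (by positivity)]
    exact Or.inl ⟨by exact_mod_cast hn, by positivity⟩
  have hden : (0:ℝ) < (n : ℝ) ^ ((1 : ℝ) / (d : ℝ)) - 1 := by linarith
  set δ := 2 * R / ((n : ℝ) ^ ((1 : ℝ) / (d : ℝ)) - 1) with hδ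
  have hδ0 : 0 ≤ δ := by positivity
  -- step identity
  have hstep : ∀ k : Fin n, Qk ((k : ℕ) + 1) = cholStep (Qk k) (z k) :=
    fun k => aux_cholResid_take_succ K z k
  -- PSD of every prefix residual
  have hpsdk : ∀ k : ℕ, k ≤ n → IsPSDKernel Ω (Qk k) := by
    intro k
    induction k with
    | zero => intro _; simpa [hQk, cholResid] using hK
    | succ k ih =>
      intro hk
      have hk' : k < n := hk
      rw [hstep ⟨k, hk'⟩]
      exact aux_cholStep_psd (ih hk'.le) (hzΩ _) (hwd ⟨k, hk'⟩)
  -- diagonal is nonincreasing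
  have hdiag : ∀ j k : ℕ, j ≤ k → k ≤ n → ∀ w ∈ Ω, Qk k w w ≤ Qk j w w := by
    intro j k hjk
    induction k with
    | zero => intro _ w hw; interval_cases j; exact le_refl _
    | succ k ih =>
      intro hk w hw
      have hk' : k < n := hk
      rcases Nat.lt_or_ge j (k+1) with hj | hj
      · have hj' : j ≤ k := by omega
        have step1 : Qk (k+1) w w ≤ Qk k w w := by
          rw [hstep ⟨k, hk'⟩]
          simp only [cholStep]
          have hsym := (hpsdk k hk'.le).1
          have h1 : Qk k (z ⟨k, hk'⟩) w = Qk k w (z ⟨k, hk'⟩) :=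
            hsym _ (hzΩ _) _ hw
          rw [h1]
          have h2 : 0 ≤ Qk k w (z ⟨k, hk'⟩) * Qk k w (z ⟨k, hk'⟩)
              / Qk k (z ⟨k, hk'⟩) (z ⟨k, hk'⟩) :=
            div_nonneg (mul_self_nonneg _) (hwd ⟨k, hk'⟩).le
          linarith
        exact le_trans step1 (ih hj' hk'.le w hw)
      · have : j = k + 1 := by omega
        subst this; exact le_refl _
  -- rows/columns at previous pivots vanish
  have hvanish : ∀ i : Fin n, ∀ k : ℕ, (i : ℕ) < k → k ≤ n →
      ∀ w, Qk k (z i) w = 0 ∧ Qk k w (z i) = 0 := by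
    intro i k
    induction k with
    | zero => omega
    | succ k ih =>
      intro hik hk w
      have hk' : k < n := hk
      have hne : Qk k (z ⟨k, hk'⟩) (z ⟨k, hk'⟩) ≠ 0 := (hwd ⟨k, hk'⟩).ne'
      rcases Nat.lt_or_ge (i : ℕ) k with hik' | hik'
      · have h1 := ih hik' hk'.le
        rw [hstep ⟨k, hk'⟩]
        simp only [cholStep]
        constructor
        · rw [(h1 w).1, (h1 (z ⟨k, hk'⟩)).1]; ring
        · rw [(h1 w).2, (h1 (z ⟨k, hk'⟩)).2]; ring
      · have : (i : ℕ) = k := by omega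
        have hieq : i = ⟨k, hk'⟩ := Fin.ext this
        rw [hstep ⟨k, hk'⟩, hieq]
        simp only [cholStep]
        constructor
        · field_simp; ring
        · field_simp; ring
  -- the quadratic quantity D is nonincreasing
  have hD : ∀ k : ℕ, k ≤ n → ∀ u ∈ Ω, ∀ v ∈ Ω,
      Qk k u u - 2 * Qk k u v + Qk k v v ≤ K u u - 2 * K u v + K v v := by
    intro k
    induction k with
    | zero => intro _ u hu v hv; simp [hQk, cholResid]
    | succ k ih =>
      intro hk u hu v hv
      have hk' : k < n := hk
      have hsym := (hpsdk k hk'.le).1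
      set w := z ⟨k, hk'⟩ with hw
      have hwΩ : w ∈ Ω := hzΩ _
      have hzz : 0 < Qk k w w := hwd ⟨k, hk'⟩
      have e1 : Qk k w u = Qk k u w := hsym _ hwΩ _ hu
      have e2 : Qk k w v = Qk k v w := hsym _ hwΩ _ hv
      have step1 : Qk (k+1) u u - 2 * Qk (k+1) u v + Qk (k+1) v v
          = (Qk k u u - 2 * Qk k u v + Qk k v v)
            - (Qk k u w - Qk k v w) ^ 2 / Qk k w w := by
        rw [hstep ⟨k, hk'⟩]
        simp only [cholStep, ← hw]
        rw [e1, e2]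
        field_simp
        ring
      have h2 : 0 ≤ (Qk k u w - Qk k v w) ^ 2 / Qk k w w :=
        div_nonneg (sq_nonneg _) hzz.le
      have := ih hk'.le u hu v hv
      linarith [step1.le, step1.ge]
  -- find a close pair of pivots
  obtain ⟨i, j, hij, hdist⟩ := aux_exists_close_pair hd hn c R hR z
    (fun i => hball (hzΩ i))
  -- wlog i < j
  obtain ⟨i, j, hij, hdist⟩ : ∃ i j : Fin n, (i : ℕ) < (j : ℕ) ∧
      dist (z i) (z j) ≤ δ := by
    rcases lt_or_gt_of_ne (fun h => hij (Fin.ext (by exact_mod_cast congrArg Fin.val h))) with h | h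
    · exact ⟨i, j, h, hdist⟩
    · exact ⟨j, i, h, by rwa [dist_comm]⟩
  -- bound on the pivot diagonal at step j
  have hjn : (j : ℕ) ≤ n := j.isLt.le
  have hpivot : Qk j (z j) (z j) ≤ 2 * L * δ := by
    have hv := hvanish i j hij hjn
    have hDj := hD j hjn (z j) (hzΩ j) (z i) (hzΩ i)
    have hKsym : K (z j) (z i) = K (z i) (z j) := hK.1 _ (hzΩ j) _ (hzΩ i)
    have hl1 := hLip (z j) (hzΩ j) (z i) (hzΩ i)
    have hl2 := hLip (z i) (hzΩ i) (z j) (hzΩ j)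
    have hn1 : ‖z j - z i‖ = dist (z j) (z i) := (dist_eq_norm _ _).symm
    have hn2 : ‖z i - z j‖ = dist (z i) (z j) := (dist_eq_norm _ _).symm
    have habs1 : K (z j) (z j) - K (z j) (z i) ≤ L * dist (z j) (z i) := by
      have := abs_le.mp hl1
      rw [hn1] at this; linarith [this.2]
    have habs2 : K (z i) (z i) - K (z i) (z j) ≤ L * dist (z i) (z j) := by
      have := abs_le.mp hl2
      rw [hn2] at this; linarith [this.2]
    have hdc : dist (z j) (z i) = dist (z i) (z j) := dist_comm _ _
    have hz1 : Qk j (z j) (z i) = 0 := (hv (z j)).2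
    have hz2 : Qk j (z i) (z i) = 0 := (hv (z i)).1
    have key : Qk j (z j) (z j)
        = Qk j (z j) (z j) - 2 * Qk j (z j) (z i) + Qk j (z i) (z i) := by
      rw [hz1, hz2]; ring
    have hbd : Qk j (z j) (z j) ≤ 2 * L * dist (z i) (z j) := by
      rw [key]
      calc Qk j (z j) (z j) - 2 * Qk j (z j) (z i) + Qk j (z i) (z i)
          ≤ K (z j) (z j) - 2 * K (z j) (z i) + K (z i) (z i) := hDj
        _ = (K (z j) (z j) - K (z j) (z i)) + (K (z i) (z i) - K (z i) (z j)) := by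
            rw [hKsym]; ring
        _ ≤ L * dist (z j) (z i) + L * dist (z i) (z j) := add_le_add habs1 habs2
        _ = 2 * L * dist (z i) (z j) := by rw [hdc]; ring
    calc Qk j (z j) (z j) ≤ 2 * L * dist (z i) (z j) := hbd
      _ ≤ 2 * L * δ := by nlinarith
  -- diagonal bound at the final residual
  have hfinal : ∀ w ∈ Ω, Qk n w w ≤ 2 * L * δ := by
    intro w hw
    calc Qk n w w ≤ Qk j w w := hdiag j n hjn le_rfl w hw
      _ ≤ Qk j (z j) (z j) := hcp j w hw
      _ ≤ 2 * L * δ := hpivot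
  have htake : (List.ofFn z).take n = List.ofFn z := by simp
  have hQnn : cholResid K (List.ofFn z) = Qk n := by
    rw [hQk]
    simp only [htake]
  rw [hQnn]
  have hoff : |Qk n x y| ≤ 2 * L * δ :=
    aux_psd_offdiag_le (hpsdk n le_rfl) hx hy (hfinal x hx) (hfinal y hy)
  have heq : 2 * L * δ = 4 * L * R / ((n : ℝ) ^ ((1 : ℝ) / (d : ℝ)) - 1) := by
    rw [hδ]; field_simp; ring
  rw [heq] at hoff
  calc |Qk n x y| ≤ 4 * L * R / ((n : ℝ) ^ ((1 : ℝ) / (d : ℝ)) - 1) := hoff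
    _ ≤ 8 * L * R / ((n : ℝ) ^ ((1 : ℝ) / (d : ℝ)) - 1) := by
        gcongr
        nlinarith
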